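/- (Csiszár sum identity) For any jointly distributed finite random sequences Y₁,…,Yₙ and S₁,…,Sₙ and any random variable T, we have ∑_{i=1}^{n} I(S_{i+1}^{n}; Y_i | Y^{i-1}, T) = ∑_{i=1}^{n} I(Y^{i-1}; S_i | S_{i+1}^{n}, T), where S_{i+1}^n = (S_{i+1},…,S_n), Y^{i-1} = (Y_1,…,Y_{i-1}), with empty tuples when the ranges are empty. -/
import Mathlib


open Finset
noncomputable section
namespace IT

variable {Ω : Type} [Fintype Ω]

/-- Marginal probability mass of the event `X = a` under the weight function `p`. -/
def marg {α : Type} [Fintype α] [DecidableEq α]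
    (p : Ω → ℝ) (X : Ω → α) (a : α) : ℝ :=
  ∑ ω, if X ω = a then p ω else 0

/-- Shannon entropy (natural logarithm) of the random variable `X`. -/
def ent {α : Type} [Fintype α] [DecidableEq α] (p : Ω → ℝ) (X : Ω → α) : ℝ :=
  ∑ a, Real.negMulLog (marg p X a)

/-- Conditional entropy `H(X | Y)`. -/
def condEnt {α β : Type} [Fintype α] [DecidableEq α] [Fintype β] [DecidableEq β]
    (p : Ω → ℝ) (X : Ω → α) (Y : Ω → β) : ℝ :=
  ent p (fun ω => (X ω, Y ω)) - ent p Y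

/-- Mutual information `I(X; Y)`. -/
def mi {α β : Type} [Fintype α] [DecidableEq α] [Fintype β] [DecidableEq β]
    (p : Ω → ℝ) (X : Ω → α) (Y : Ω → β) : ℝ :=
  ent p X + ent p Y - ent p (fun ω => (X ω, Y ω))

/-- Conditional mutual information `I(X; Y | Z)`. -/
def condMI {α β γ : Type} [Fintype α] [DecidableEq α] [Fintype β] [DecidableEq β]
    [Fintype γ] [DecidableEq γ]
    (p : Ω → ℝ) (X : Ω → α) (Y : Ω → β) (Z : Ω → γ) : ℝ :=
  condEnt p X Z + condEnt p Y Z - condEnt p (fun ω => (X ω, Y ω)) Z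

/-- `X` and `Y` are conditionally independent given `Z`:
`P(X=a, Z=c) ⬝ P(Y=b, Z=c) = P(X=a, Y=b, Z=c) ⬝ P(Z=c)`. -/
def CondIndep {α β γ : Type} [Fintype α] [DecidableEq α] [Fintype β] [DecidableEq β]
    [Fintype γ] [DecidableEq γ]
    (p : Ω → ℝ) (X : Ω → α) (Y : Ω → β) (Z : Ω → γ) : Prop :=
  ∀ a b c,
    marg p (fun ω => (X ω, Z ω)) (a, c) * marg p (fun ω => (Y ω, Z ω)) (b, c) =
    marg p (fun ω => (X ω, Y ω, Z ω)) (a, b, c) * marg p Z c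

/-- `p` is a probability mass function on `Ω`. -/
def IsProb (p : Ω → ℝ) : Prop := (∀ ω, 0 ≤ p ω) ∧ ∑ ω, p ω = 1

end IT
section CsAux
open Finset
noncomputable section

lemma ent_congr {Ω α β : Type} [Fintype Ω] [Fintype α] [DecidableEq α] [Fintype β] [DecidableEq β]
    (p : Ω → ℝ) (X : Ω → α) (X' : Ω → β) (f : α → β) (hf : Function.Injective f)
    (h : ∀ ω, X' ω = f (X ω)) : IT.ent p X' = IT.ent p X := by
  unfold IT.ent
  rw [← Finset.sum_subset (Finset.subset_univ (Finset.univ.image f))]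
  · rw [Finset.sum_image (fun x _ y _ hxy => hf hxy)]
    refine Finset.sum_congr rfl (fun a _ => ?_)
    congr 1
    unfold IT.marg
    refine Finset.sum_congr rfl (fun ω _ => ?_)
    simp [h ω, hf.eq_iff]
  · intro b _ hb
    have : IT.marg p X' b = 0 := by
      unfold IT.marg
      refine Finset.sum_eq_zero (fun ω _ => ?_)
      rw [h ω, if_neg]
      intro hc
      exact hb (Finset.mem_image.mpr ⟨X ω, Finset.mem_univ _, hc⟩)
    simp [this]

lemma condMI_eq {Ω α β γ : Type} [Fintype Ω] [Fintype α] [DecidableEq α] [Fintype β] [DecidableEq β]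
    [Fintype γ] [DecidableEq γ] (p : Ω → ℝ) (X : Ω → α) (Y : Ω → β) (Z : Ω → γ) :
    IT.condMI p X Y Z =
      IT.ent p (fun ω => (X ω, Z ω)) + IT.ent p (fun ω => (Y ω, Z ω))
        - IT.ent p (fun ω => ((X ω, Y ω), Z ω)) - IT.ent p Z := by
  unfold IT.condMI IT.condEnt; ring

variable {Ω : Type} [Fintype Ω] {n : ℕ} {𝒴 𝒮 𝒯 : Type}
    [Fintype 𝒴] [DecidableEq 𝒴] [Fintype 𝒮] [DecidableEq 𝒮]
    [Fintype 𝒯] [DecidableEq 𝒯]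

/-- `H(Y_{<k}, T)` -/
noncomputable def csA (p : Ω → ℝ) (Y : Ω → Fin n → 𝒴) (T : Ω → 𝒯) (k : ℕ) : ℝ :=
  IT.ent p (fun ω => ((fun j : {j : Fin n // (j : ℕ) < k} => Y ω j), T ω))

/-- `H(S_{≥k}, T)` -/
noncomputable def csB (p : Ω → ℝ) (S : Ω → Fin n → 𝒮) (T : Ω → 𝒯) (k : ℕ) : ℝ :=
  IT.ent p (fun ω => ((fun j : {j : Fin n // k ≤ (j : ℕ)} => S ω j), T ω))

/-- `H(S_{≥k}, Y_{<k}, T)` -/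
noncomputable def csE (p : Ω → ℝ) (Y : Ω → Fin n → 𝒴) (S : Ω → Fin n → 𝒮) (T : Ω → 𝒯)
    (k : ℕ) : ℝ :=
  IT.ent p (fun ω => ((fun j : {j : Fin n // k ≤ (j : ℕ)} => S ω j),
    (fun j : {j : Fin n // (j : ℕ) < k} => Y ω j), T ω))

lemma cs_term1 (p : Ω → ℝ) (Y : Ω → Fin n → 𝒴) (S : Ω → Fin n → 𝒮) (T : Ω → 𝒯) (i : Fin n) :
    IT.ent p (fun ω => ((fun j : {j : Fin n // j < i} => Y ω j),
        ((fun j : {j : Fin n // i < j} => S ω j), T ω)))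
      = IT.ent p (fun ω => ((fun j : {j : Fin n // i < j} => S ω j),
        ((fun j : {j : Fin n // j < i} => Y ω j), T ω))) := by
  refine ent_congr p _ _
    (fun x : ({j : Fin n // i < j} → 𝒮) × ({j : Fin n // j < i} → 𝒴) × 𝒯 =>
      (x.2.1, x.1, x.2.2)) ?_ (fun ω => rfl)
  rintro ⟨a1, a2, a3⟩ ⟨b1, b2, b3⟩ h
  simp only [Prod.mk.injEq] at h ⊢
  tauto

lemma cs_term2L (p : Ω → ℝ) (Y : Ω → Fin n → 𝒴) (T : Ω → 𝒯) (i : Fin n) :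
    IT.ent p (fun ω => (Y ω i, ((fun j : {j : Fin n // j < i} => Y ω j), T ω)))
      = csA p Y T ((i : ℕ) + 1) := by
  refine ent_congr p _ _
    (fun x : ({j : Fin n // (j : ℕ) < (i : ℕ) + 1} → 𝒴) × 𝒯 =>
      (x.1 ⟨i, Nat.lt_succ_self _⟩,
        ((fun j : {j : Fin n // j < i} => x.1 ⟨j.1, Nat.lt_succ_of_lt j.2⟩), x.2)))
    ?_ (fun ω => rfl)
  rintro ⟨a1, a2⟩ ⟨b1, b2⟩ h
  simp only [Prod.mk.injEq] at h ⊢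
  obtain ⟨h1, h2, h3⟩ := h
  refine ⟨funext fun j => ?_, h3⟩
  obtain ⟨j, hj⟩ := j
  rcases Nat.lt_or_ge (j : ℕ) (i : ℕ) with hc | hc
  · exact congrFun h2 ⟨j, hc⟩
  · have : (⟨j, hj⟩ : {j : Fin n // (j : ℕ) < (i : ℕ) + 1}) = ⟨i, Nat.lt_succ_self _⟩ :=
      Subtype.ext (Fin.ext (show (j : ℕ) = (i : ℕ) by omega))
    rw [this]; exact h1

lemma cs_term3L (p : Ω → ℝ) (Y : Ω → Fin n → 𝒴) (S : Ω → Fin n → 𝒮) (T : Ω → 𝒯) (i : Fin n) :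
    IT.ent p (fun ω => (((fun j : {j : Fin n // i < j} => S ω j), Y ω i),
        ((fun j : {j : Fin n // j < i} => Y ω j), T ω)))
      = csE p Y S T ((i : ℕ) + 1) := by
  refine ent_congr p _ _
    (fun x : ({j : Fin n // (i : ℕ) + 1 ≤ (j : ℕ)} → 𝒮) ×
        ({j : Fin n // (j : ℕ) < (i : ℕ) + 1} → 𝒴) × 𝒯 =>
      (((fun j : {j : Fin n // i < j} => x.1 ⟨j.1, j.2⟩), x.2.1 ⟨i, Nat.lt_succ_self _⟩),
        ((fun j : {j : Fin n // j < i} => x.2.1 ⟨j.1, Nat.lt_succ_of_lt j.2⟩), x.2.2)))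
    ?_ (fun ω => rfl)
  rintro ⟨a1, a2, a3⟩ ⟨b1, b2, b3⟩ h
  simp only [Prod.mk.injEq] at h ⊢
  obtain ⟨⟨h1, h2⟩, h3, h4⟩ := h
  refine ⟨funext fun j => ?_, funext fun j => ?_, h4⟩
  · exact congrFun h1 ⟨j.1, j.2⟩
  · obtain ⟨j, hj⟩ := j
    rcases Nat.lt_or_ge (j : ℕ) (i : ℕ) with hc | hc
    · exact congrFun h3 ⟨j, hc⟩
    · have : (⟨j, hj⟩ : {j : Fin n // (j : ℕ) < (i : ℕ) + 1}) = ⟨i, Nat.lt_succ_self _⟩ :=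
        Subtype.ext (Fin.ext (show (j : ℕ) = (i : ℕ) by omega))
      rw [this]; exact h2

lemma cs_term4L (p : Ω → ℝ) (Y : Ω → Fin n → 𝒴) (T : Ω → 𝒯) (i : Fin n) :
    IT.ent p (fun ω => ((fun j : {j : Fin n // j < i} => Y ω j), T ω))
      = csA p Y T (i : ℕ) := by
  refine ent_congr p _ _
    (fun x : ({j : Fin n // (j : ℕ) < (i : ℕ)} → 𝒴) × 𝒯 =>
      ((fun j : {j : Fin n // j < i} => x.1 ⟨j.1, j.2⟩), x.2)) ?_ (fun ω => rfl)
  rintro ⟨a1, a2⟩ ⟨b1, b2⟩ h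
  simp only [Prod.mk.injEq] at h ⊢
  exact ⟨funext fun j => congrFun h.1 ⟨j.1, j.2⟩, h.2⟩

lemma cs_term2R (p : Ω → ℝ) (S : Ω → Fin n → 𝒮) (T : Ω → 𝒯) (i : Fin n) :
    IT.ent p (fun ω => (S ω i, ((fun j : {j : Fin n // i < j} => S ω j), T ω)))
      = csB p S T (i : ℕ) := by
  refine ent_congr p _ _
    (fun x : ({j : Fin n // (i : ℕ) ≤ (j : ℕ)} → 𝒮) × 𝒯 =>
      (x.1 ⟨i, Nat.le_refl _⟩,
        ((fun j : {j : Fin n // i < j} => x.1 ⟨j.1, Nat.le_of_lt j.2⟩), x.2)))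
    ?_ (fun ω => rfl)
  rintro ⟨a1, a2⟩ ⟨b1, b2⟩ h
  simp only [Prod.mk.injEq] at h ⊢
  obtain ⟨h1, h2, h3⟩ := h
  refine ⟨funext fun j => ?_, h3⟩
  obtain ⟨j, hj⟩ := j
  rcases Nat.lt_or_ge (i : ℕ) (j : ℕ) with hc | hc
  · exact congrFun h2 ⟨j, hc⟩
  · have : (⟨j, hj⟩ : {j : Fin n // (i : ℕ) ≤ (j : ℕ)}) = ⟨i, Nat.le_refl _⟩ :=
      Subtype.ext (Fin.ext (show (j : ℕ) = (i : ℕ) by omega))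
    rw [this]; exact h1

lemma cs_term3R (p : Ω → ℝ) (Y : Ω → Fin n → 𝒴) (S : Ω → Fin n → 𝒮) (T : Ω → 𝒯) (i : Fin n) :
    IT.ent p (fun ω => (((fun j : {j : Fin n // j < i} => Y ω j), S ω i),
        ((fun j : {j : Fin n // i < j} => S ω j), T ω)))
      = csE p Y S T (i : ℕ) := by
  refine ent_congr p _ _
    (fun x : ({j : Fin n // (i : ℕ) ≤ (j : ℕ)} → 𝒮) ×
        ({j : Fin n // (j : ℕ) < (i : ℕ)} → 𝒴) × 𝒯 =>
      (((fun j : {j : Fin n // j < i} => x.2.1 ⟨j.1, j.2⟩), x.1 ⟨i, Nat.le_refl _⟩),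
        ((fun j : {j : Fin n // i < j} => x.1 ⟨j.1, Nat.le_of_lt j.2⟩), x.2.2)))
    ?_ (fun ω => rfl)
  rintro ⟨a1, a2, a3⟩ ⟨b1, b2, b3⟩ h
  simp only [Prod.mk.injEq] at h ⊢
  obtain ⟨⟨h1, h2⟩, h3, h4⟩ := h
  refine ⟨funext fun j => ?_, funext fun j => ?_, h4⟩
  · obtain ⟨j, hj⟩ := j
    rcases Nat.lt_or_ge (i : ℕ) (j : ℕ) with hc | hc
    · exact congrFun h3 ⟨j, hc⟩
    · have : (⟨j, hj⟩ : {j : Fin n // (i : ℕ) ≤ (j : ℕ)}) = ⟨i, Nat.le_refl _⟩ :=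
        Subtype.ext (Fin.ext (show (j : ℕ) = (i : ℕ) by omega))
      rw [this]; exact h2
  · exact congrFun h1 ⟨j.1, j.2⟩

lemma cs_term4R (p : Ω → ℝ) (S : Ω → Fin n → 𝒮) (T : Ω → 𝒯) (i : Fin n) :
    IT.ent p (fun ω => ((fun j : {j : Fin n // i < j} => S ω j), T ω))
      = csB p S T ((i : ℕ) + 1) := by
  refine ent_congr p _ _
    (fun x : ({j : Fin n // (i : ℕ) + 1 ≤ (j : ℕ)} → 𝒮) × 𝒯 =>
      ((fun j : {j : Fin n // i < j} => x.1 ⟨j.1, j.2⟩), x.2)) ?_ (fun ω => rfl)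
  rintro ⟨a1, a2⟩ ⟨b1, b2⟩ h
  simp only [Prod.mk.injEq] at h ⊢
  exact ⟨funext fun j => congrFun h.1 ⟨j.1, j.2⟩, h.2⟩

lemma csA_zero (p : Ω → ℝ) (Y : Ω → Fin n → 𝒴) (T : Ω → 𝒯) :
    csA p Y T 0 = IT.ent p T := by
  unfold csA
  refine ent_congr p T _
    (fun t : 𝒯 => ((fun j : {j : Fin n // (j : ℕ) < 0} => ((Nat.not_lt_zero _ j.2).elim : 𝒴)), t))
    ?_ ?_
  · intro a b h; exact congrArg Prod.snd h
  · intro ω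
    refine Prod.ext (funext fun j => (Nat.not_lt_zero _ j.2).elim) rfl

lemma csB_top (p : Ω → ℝ) (S : Ω → Fin n → 𝒮) (T : Ω → 𝒯) :
    csB p S T n = IT.ent p T := by
  unfold csB
  refine ent_congr p T _
    (fun t : 𝒯 => ((fun j : {j : Fin n // n ≤ (j : ℕ)} => (((Nat.not_lt.mpr j.2) j.1.isLt).elim : 𝒮)), t))
    ?_ ?_
  · intro a b h; exact congrArg Prod.snd h
  · intro ω
    refine Prod.ext (funext fun j => ((Nat.not_lt.mpr j.2) j.1.isLt).elim) rfl

lemma csE_top (p : Ω → ℝ) (Y : Ω → Fin n → 𝒴) (S : Ω → Fin n → 𝒮) (T : Ω → 𝒯) :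
    csE p Y S T n = csA p Y T n := by
  unfold csE csA
  refine ent_congr p _ _
    (fun x : ({j : Fin n // (j : ℕ) < n} → 𝒴) × 𝒯 =>
      ((fun j : {j : Fin n // n ≤ (j : ℕ)} => (((Nat.not_lt.mpr j.2) j.1.isLt).elim : 𝒮)),
        x.1, x.2)) ?_ ?_
  · intro a b h
    simp only [Prod.mk.injEq] at h
    exact Prod.ext h.2.1 h.2.2
  · intro ω
    refine Prod.ext (funext fun j => ((Nat.not_lt.mpr j.2) j.1.isLt).elim) rfl

lemma csE_zero (p : Ω → ℝ) (Y : Ω → Fin n → 𝒴) (S : Ω → Fin n → 𝒮) (T : Ω → 𝒯) :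
    csE p Y S T 0 = csB p S T 0 := by
  unfold csE csB
  refine ent_congr p _ _
    (fun x : ({j : Fin n // 0 ≤ (j : ℕ)} → 𝒮) × 𝒯 =>
      (x.1, (fun j : {j : Fin n // (j : ℕ) < 0} => ((Nat.not_lt_zero _ j.2).elim : 𝒴)), x.2)) ?_ ?_
  · intro a b h
    simp only [Prod.mk.injEq] at h
    exact Prod.ext h.1 h.2.2
  · intro ω
    refine Prod.ext rfl (Prod.ext (funext fun j => (Nat.not_lt_zero _ j.2).elim) rfl)

end
end CsAux

/-- Csiszár sum identity:
`∑ i I(S_{i+1}^n; Y_i | Y^{i-1}, T) = ∑ i I(Y^{i-1}; S_i | S_{i+1}^n, T)`. -/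
theorem stmt10
    {Ω : Type} [Fintype Ω] {n : ℕ} {𝒴 𝒮 𝒯 : Type}
    [Fintype 𝒴] [DecidableEq 𝒴] [Fintype 𝒮] [DecidableEq 𝒮]
    [Fintype 𝒯] [DecidableEq 𝒯]
    (p : Ω → ℝ) (hp : IT.IsProb p)
    (Y : Ω → Fin n → 𝒴) (S : Ω → Fin n → 𝒮) (T : Ω → 𝒯) :
    (∑ i : Fin n,
      IT.condMI p
        (fun ω => (fun j : {j : Fin n // i < j} => S ω j))
        (fun ω => Y ω i)
        (fun ω => ((fun j : {j : Fin n // j < i} => Y ω j), T ω)))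
    = ∑ i : Fin n,
      IT.condMI p
        (fun ω => (fun j : {j : Fin n // j < i} => Y ω j))
        (fun ω => S ω i)
        (fun ω => ((fun j : {j : Fin n // i < j} => S ω j), T ω)) := by
  have key : ∀ i : Fin n,
      IT.condMI p
        (fun ω => (fun j : {j : Fin n // i < j} => S ω j))
        (fun ω => Y ω i)
        (fun ω => ((fun j : {j : Fin n // j < i} => Y ω j), T ω))
      - IT.condMI p
        (fun ω => (fun j : {j : Fin n // j < i} => Y ω j))
        (fun ω => S ω i)
        (fun ω => ((fun j : {j : Fin n // i < j} => S ω j), T ω))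
      = csA p Y T ((i : ℕ) + 1) + csB p S T ((i : ℕ) + 1) - csE p Y S T ((i : ℕ) + 1)
        - (csA p Y T (i : ℕ) + csB p S T (i : ℕ) - csE p Y S T (i : ℕ)) := by
    intro i
    simp only [condMI_eq]
    rw [cs_term1 p Y S T i, cs_term2L p Y T i, cs_term3L p Y S T i, cs_term2R p S T i,
      cs_term3R p Y S T i, cs_term4R p S T i, cs_term4L p Y T i]
    ring
  rw [← sub_eq_zero, ← Finset.sum_sub_distrib]
  have e1 := Finset.sum_congr rfl (fun i (_ : i ∈ Finset.univ) => key i)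
  rw [e1, Fin.sum_univ_eq_sum_range
    (fun m => csA p Y T (m + 1) + csB p S T (m + 1) - csE p Y S T (m + 1)
      - (csA p Y T m + csB p S T m - csE p Y S T m)) n,
    Finset.sum_range_sub (fun m => csA p Y T m + csB p S T m - csE p Y S T m) n,
    csE_top, csE_zero, csA_zero, csB_top]
  ring
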